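/- Let σ > 0, K > 0, r ∈ ℝ and let p ≥ 1 be an integer. Define, for τ > 0 and x > 0, u(τ,x) = ∑_{q=0}^{p} (p!/(q!(p−q)!))·x^{p−q}·(−K)^{q}·e^{(p−q−1)(r + (1/2)(p−q)σ²)τ}·N(d_{p,q}(τ,x)), where d_{p,q}(τ,x) = (ln(x/K) + (r + (p − q − 1/2)σ²)τ)/(σ√τ). Then u satisfies the time-reversed Black–Scholes PDE ∂u/∂τ = (1/2)σ²x² ∂²u/∂x² + r·x·∂u/∂x − r·u at every point (τ,x) with τ > 0 and x > 0. -/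

import Mathlib

/-- The standard normal cumulative distribution function. -/
noncomputable def stdNormalCdf (d : ℝ) : ℝ :=
  (Real.sqrt (2 * Real.pi))⁻¹ * ∫ y in Set.Iic d, Real.exp (-(y ^ 2) / 2)

/-- `d_{p,q}(τ,x) = (ln(x/K) + (r + (p − q − 1/2)σ²)τ)/(σ√τ)`. -/
noncomputable def dpq (σ K r : ℝ) (p q : ℕ) (τ x : ℝ) : ℝ :=
  (Real.log (x / K) + (r + ((p : ℝ) - q - 1 / 2) * σ ^ 2) * τ) / (σ * Real.sqrt τ)

/-- The closed-form Black-Scholes price of a powered option with power `p` and strike `K`,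
paying `max (x - K) 0 ^ p` at maturity. -/
noncomputable def bsPowered (σ K r : ℝ) (p : ℕ) (τ x : ℝ) : ℝ :=
  ∑ q ∈ Finset.range (p + 1),
    (Nat.choose p q : ℝ) * x ^ (p - q) * (-K) ^ q
      * Real.exp (((p : ℝ) - q - 1) * (r + 1 / 2 * ((p : ℝ) - q) * σ ^ 2) * τ)
      * stdNormalCdf (dpq σ K r p q τ x)

/-- The Black-Scholes powered-option price satisfies the time-reversed Black-Scholes PDE
`∂u/∂τ = (1/2) σ² x² ∂²u/∂x² + r x ∂u/∂x − r u` for all `τ > 0`, `x > 0`. -/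
noncomputable def phiR (d : ℝ) : ℝ :=
  (Real.sqrt (2 * Real.pi))⁻¹ * Real.exp (-(d ^ 2) / 2)

lemma gauss_integrable : MeasureTheory.Integrable (fun y : ℝ => Real.exp (-(y ^ 2) / 2)) := by
  have h := integrable_exp_neg_mul_sq (by norm_num : (0:ℝ) < 1/2)
  convert h using 2 with y
  ring_nf

lemma hasDerivAt_stdNormalCdf (d : ℝ) : HasDerivAt stdNormalCdf (phiR d) d := by
  have hint := gauss_integrable
  have hfun : ∀ z : ℝ, stdNormalCdf z = (Real.sqrt (2 * Real.pi))⁻¹ *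
      ((∫ y in Set.Iic (0:ℝ), Real.exp (-(y ^ 2) / 2)) +
        ∫ y in (0:ℝ)..z, Real.exp (-(y ^ 2) / 2)) := by
    intro z
    rw [← intervalIntegral.integral_Iic_sub_Iic hint.integrableOn hint.integrableOn]
    unfold stdNormalCdf
    ring
  have hder : HasDerivAt (fun z : ℝ => (Real.sqrt (2 * Real.pi))⁻¹ *
      ((∫ y in Set.Iic (0:ℝ), Real.exp (-(y ^ 2) / 2)) +
        ∫ y in (0:ℝ)..z, Real.exp (-(y ^ 2) / 2))) (phiR d) d := by
    have h1 : HasDerivAt (fun z : ℝ => ∫ y in (0:ℝ)..z, Real.exp (-(y ^ 2) / 2))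
        (Real.exp (-(d ^ 2) / 2)) d :=
      intervalIntegral.integral_hasDerivAt_right hint.intervalIntegrable
        hint.aestronglyMeasurable.stronglyMeasurableAtFilter (by fun_prop)
    simpa [phiR, mul_comm] using (h1.const_add _).const_mul (Real.sqrt (2 * Real.pi))⁻¹
  exact hder.congr_of_eventuallyEq (Filter.Eventually.of_forall hfun)

/-- First x-derivative of the q-th term. -/
noncomputable def bsP1 (σ K r : ℝ) (p q : ℕ) (τ y : ℝ) : ℝ :=
  (Nat.choose p q : ℝ) * (-K) ^ q
      * Real.exp (((p : ℝ) - q - 1) * (r + 1 / 2 * ((p : ℝ) - q) * σ ^ 2) * τ)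
      * (((p - q : ℕ) : ℝ) * y ^ (p - q - 1)) * stdNormalCdf (dpq σ K r p q τ y)
  + (Nat.choose p q : ℝ) * (-K) ^ q
      * Real.exp (((p : ℝ) - q - 1) * (r + 1 / 2 * ((p : ℝ) - q) * σ ^ 2) * τ)
      * (y ^ (p - q) * (phiR (dpq σ K r p q τ y) * (y⁻¹ * (σ * Real.sqrt τ)⁻¹)))

lemma hasDerivAt_dpq_x (σ K r : ℝ) (p q : ℕ) (τ : ℝ) (hσ : 0 < σ) (hK : 0 < K)
    (hτ : 0 < τ) {y : ℝ} (hy : 0 < y) :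
    HasDerivAt (fun z : ℝ => dpq σ K r p q τ z) (y⁻¹ * (σ * Real.sqrt τ)⁻¹) y := by
  have hlog : HasDerivAt (fun z : ℝ => Real.log (z / K)) y⁻¹ y := by
    have h2 : HasDerivAt (fun z : ℝ => z / K) (1 / K) y := by
      simpa using (hasDerivAt_id y).div_const K
    have h := (Real.hasDerivAt_log (div_pos hy hK).ne').comp y h2
    refine h.congr_deriv ?_
    field_simp
  have h := (hlog.add_const ((r + ((p : ℝ) - q - 1 / 2) * σ ^ 2) * τ)).div_const
      (σ * Real.sqrt τ)
  have : y⁻¹ / (σ * Real.sqrt τ) = y⁻¹ * (σ * Real.sqrt τ)⁻¹ := div_eq_mul_inv _ _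
  rw [← this]
  exact h

lemma hasDerivAt_cdf_dpq_x (σ K r : ℝ) (p q : ℕ) (τ : ℝ) (hσ : 0 < σ) (hK : 0 < K)
    (hτ : 0 < τ) {y : ℝ} (hy : 0 < y) :
    HasDerivAt (fun z : ℝ => stdNormalCdf (dpq σ K r p q τ z))
      (phiR (dpq σ K r p q τ y) * (y⁻¹ * (σ * Real.sqrt τ)⁻¹)) y := by
  have h := (hasDerivAt_stdNormalCdf (dpq σ K r p q τ y)).comp y
    (hasDerivAt_dpq_x σ K r p q τ hσ hK hτ hy)
  exact h

lemma hasDerivAt_term_x (σ K r : ℝ) (p q : ℕ) (τ : ℝ) (hσ : 0 < σ) (hK : 0 < K)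
    (hτ : 0 < τ) {y : ℝ} (hy : 0 < y) :
    HasDerivAt (fun z : ℝ =>
      (Nat.choose p q : ℝ) * z ^ (p - q) * (-K) ^ q
        * Real.exp (((p : ℝ) - q - 1) * (r + 1 / 2 * ((p : ℝ) - q) * σ ^ 2) * τ)
        * stdNormalCdf (dpq σ K r p q τ z)) (bsP1 σ K r p q τ y) y := by
  have hNd := hasDerivAt_cdf_dpq_x σ K r p q τ hσ hK hτ hy
  have h := ((((hasDerivAt_pow (p - q) y).const_mul ((p.choose q : ℝ))).mul_const
      ((-K) ^ q)).mul_const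
      (Real.exp (((p : ℝ) - q - 1) * (r + 1 / 2 * ((p : ℝ) - q) * σ ^ 2) * τ))).mul hNd
  refine h.congr_deriv ?_
  unfold bsP1
  ring

lemma hasDerivAt_phiR_dpq_x (σ K r : ℝ) (p q : ℕ) (τ : ℝ) (hσ : 0 < σ) (hK : 0 < K)
    (hτ : 0 < τ) {y : ℝ} (hy : 0 < y) :
    HasDerivAt (fun z : ℝ => phiR (dpq σ K r p q τ z))
      (phiR (dpq σ K r p q τ y) * (-(dpq σ K r p q τ y)) * (y⁻¹ * (σ * Real.sqrt τ)⁻¹)) y := by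
  have hd := hasDerivAt_dpq_x σ K r p q τ hσ hK hτ hy
  have h := (((hd.pow 2).neg.div_const 2).exp).const_mul (Real.sqrt (2 * Real.pi))⁻¹
  unfold phiR
  refine h.congr_deriv ?_
  norm_num
  ring

/-- Second x-derivative of the q-th term. -/
noncomputable def bsP2 (σ K r : ℝ) (p q : ℕ) (τ x : ℝ) : ℝ :=
  (Nat.choose p q : ℝ) * (-K) ^ q
      * Real.exp (((p : ℝ) - q - 1) * (r + 1 / 2 * ((p : ℝ) - q) * σ ^ 2) * τ)
      * (((p - q : ℕ) : ℝ) * (((p - q - 1 : ℕ) : ℝ) * x ^ (p - q - 1 - 1)))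
      * stdNormalCdf (dpq σ K r p q τ x)
  + 2 * ((Nat.choose p q : ℝ) * (-K) ^ q
      * Real.exp (((p : ℝ) - q - 1) * (r + 1 / 2 * ((p : ℝ) - q) * σ ^ 2) * τ))
      * (((p - q : ℕ) : ℝ) * x ^ (p - q - 1)) * phiR (dpq σ K r p q τ x)
      * (x⁻¹ * (σ * Real.sqrt τ)⁻¹)
  - (Nat.choose p q : ℝ) * (-K) ^ q
      * Real.exp (((p : ℝ) - q - 1) * (r + 1 / 2 * ((p : ℝ) - q) * σ ^ 2) * τ)
      * x ^ (p - q) * phiR (dpq σ K r p q τ x) * dpq σ K r p q τ x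
      * (x⁻¹ * (σ * Real.sqrt τ)⁻¹) * (x⁻¹ * (σ * Real.sqrt τ)⁻¹)
  - (Nat.choose p q : ℝ) * (-K) ^ q
      * Real.exp (((p : ℝ) - q - 1) * (r + 1 / 2 * ((p : ℝ) - q) * σ ^ 2) * τ)
      * x ^ (p - q) * phiR (dpq σ K r p q τ x) * ((x ^ 2)⁻¹ * (σ * Real.sqrt τ)⁻¹)

lemma hasDerivAt_bsP1_x (σ K r : ℝ) (p q : ℕ) (τ : ℝ) (hσ : 0 < σ) (hK : 0 < K)
    (hτ : 0 < τ) {x : ℝ} (hx : 0 < x) :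
    HasDerivAt (fun z : ℝ => bsP1 σ K r p q τ z) (bsP2 σ K r p q τ x) x := by
  have hNd := hasDerivAt_cdf_dpq_x σ K r p q τ hσ hK hτ hx
  have hphi := hasDerivAt_phiR_dpq_x σ K r p q τ hσ hK hτ hx
  have hinv := hasDerivAt_inv hx.ne'
  have hA := (((hasDerivAt_pow (p - q - 1) x).const_mul (((p - q : ℕ) : ℝ))).const_mul
      ((Nat.choose p q : ℝ) * (-K) ^ q
        * Real.exp (((p : ℝ) - q - 1) * (r + 1 / 2 * ((p : ℝ) - q) * σ ^ 2) * τ))).mul hNd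
  have hB := ((hasDerivAt_pow (p - q) x).mul
      (hphi.mul (hinv.mul_const (σ * Real.sqrt τ)⁻¹))).const_mul
      ((Nat.choose p q : ℝ) * (-K) ^ q
        * Real.exp (((p : ℝ) - q - 1) * (r + 1 / 2 * ((p : ℝ) - q) * σ ^ 2) * τ))
  unfold bsP1 bsP2
  refine (hA.add hB).congr_deriv ?_
  norm_num
  ring

/-- τ-derivative of the q-th term. -/
noncomputable def bsPT (σ K r : ℝ) (p q : ℕ) (τ x : ℝ) : ℝ :=
  (Nat.choose p q : ℝ) * x ^ (p - q) * (-K) ^ q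
      * Real.exp (((p : ℝ) - q - 1) * (r + 1 / 2 * ((p : ℝ) - q) * σ ^ 2) * τ)
      * (((p : ℝ) - q - 1) * (r + 1 / 2 * ((p : ℝ) - q) * σ ^ 2))
      * stdNormalCdf (dpq σ K r p q τ x)
  + (Nat.choose p q : ℝ) * x ^ (p - q) * (-K) ^ q
      * Real.exp (((p : ℝ) - q - 1) * (r + 1 / 2 * ((p : ℝ) - q) * σ ^ 2) * τ)
      * phiR (dpq σ K r p q τ x)
      * ((r + ((p : ℝ) - q - 1 / 2) * σ ^ 2) / (σ * Real.sqrt τ)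
          - dpq σ K r p q τ x / (2 * τ))

lemma hasDerivAt_dpq_t (σ K r : ℝ) (p q : ℕ) (x : ℝ) (hσ : 0 < σ) (hK : 0 < K)
    (hx : 0 < x) {τ : ℝ} (hτ : 0 < τ) :
    HasDerivAt (fun t : ℝ => dpq σ K r p q t x)
      ((r + ((p : ℝ) - q - 1 / 2) * σ ^ 2) / (σ * Real.sqrt τ)
        - dpq σ K r p q τ x / (2 * τ)) τ := by
  have hb : HasDerivAt (fun t : ℝ => Real.log (x / K)
      + (r + ((p : ℝ) - q - 1 / 2) * σ ^ 2) * t)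
      (r + ((p : ℝ) - q - 1 / 2) * σ ^ 2) τ := by
    simpa using ((hasDerivAt_id τ).const_mul
      (r + ((p : ℝ) - q - 1 / 2) * σ ^ 2)).const_add (Real.log (x / K))
  have hs0 : 0 < Real.sqrt τ := Real.sqrt_pos.2 hτ
  have hden : HasDerivAt (fun t : ℝ => σ * Real.sqrt t)
      (σ * (1 / (2 * Real.sqrt τ))) τ := (Real.hasDerivAt_sqrt hτ.ne').const_mul σ
  have h := hb.div hden (by positivity)
  unfold dpq
  refine h.congr_deriv ?_
  set s := Real.sqrt τ with hs
  have hs2 : s ^ 2 = τ := Real.sq_sqrt hτ.le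
  rw [show τ = s ^ 2 from hs2.symm]
  field_simp

lemma hasDerivAt_term_t (σ K r : ℝ) (p q : ℕ) (x : ℝ) (hσ : 0 < σ) (hK : 0 < K)
    (hx : 0 < x) {τ : ℝ} (hτ : 0 < τ) :
    HasDerivAt (fun t : ℝ =>
      (Nat.choose p q : ℝ) * x ^ (p - q) * (-K) ^ q
        * Real.exp (((p : ℝ) - q - 1) * (r + 1 / 2 * ((p : ℝ) - q) * σ ^ 2) * t)
        * stdNormalCdf (dpq σ K r p q t x)) (bsPT σ K r p q τ x) τ := by
  have hdT := hasDerivAt_dpq_t σ K r p q x hσ hK hx hτ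
  have hNdT : HasDerivAt (fun t : ℝ => stdNormalCdf (dpq σ K r p q t x))
      (phiR (dpq σ K r p q τ x) * ((r + ((p : ℝ) - q - 1 / 2) * σ ^ 2) / (σ * Real.sqrt τ)
        - dpq σ K r p q τ x / (2 * τ))) τ := by
    have h := (hasDerivAt_stdNormalCdf (dpq σ K r p q τ x)).comp τ hdT; exact h
  have hE : HasDerivAt (fun t : ℝ =>
      Real.exp (((p : ℝ) - q - 1) * (r + 1 / 2 * ((p : ℝ) - q) * σ ^ 2) * t))
      (Real.exp (((p : ℝ) - q - 1) * (r + 1 / 2 * ((p : ℝ) - q) * σ ^ 2) * τ)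
        * (((p : ℝ) - q - 1) * (r + 1 / 2 * ((p : ℝ) - q) * σ ^ 2))) τ := by
    simpa using ((hasDerivAt_id τ).const_mul
      (((p : ℝ) - q - 1) * (r + 1 / 2 * ((p : ℝ) - q) * σ ^ 2))).exp
  have h := (hE.const_mul ((Nat.choose p q : ℝ) * x ^ (p - q) * (-K) ^ q)).mul hNdT
  refine h.congr_deriv ?_
  unfold bsPT
  ring

lemma key_identity (σ K r : ℝ) (hσ : 0 < σ) (hK : 0 < K) (p q : ℕ) (hq : q ≤ p)
    (τ x : ℝ) (hτ : 0 < τ) (hx : 0 < x) :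
    bsPT σ K r p q τ x
      = 1 / 2 * σ ^ 2 * x ^ 2 * bsP2 σ K r p q τ x + r * x * bsP1 σ K r p q τ x
        - r * ((Nat.choose p q : ℝ) * x ^ (p - q) * (-K) ^ q
            * Real.exp (((p : ℝ) - q - 1) * (r + 1 / 2 * ((p : ℝ) - q) * σ ^ 2) * τ)
            * stdNormalCdf (dpq σ K r p q τ x)) := by
  unfold bsPT bsP1 bsP2
  set s := Real.sqrt τ with hs
  have hs0 : 0 < s := Real.sqrt_pos.2 hτ
  have hs2 : s ^ 2 = τ := Real.sq_sqrt hτ.le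
  set E := Real.exp (((p : ℝ) - q - 1) * (r + 1 / 2 * ((p : ℝ) - q) * σ ^ 2) * τ) with hE
  set D := dpq σ K r p q τ x with hD
  set N := stdNormalCdf D with hN
  set P := phiR D with hP
  rw [show τ = s ^ 2 from hs2.symm]
  have hcast : (p : ℝ) - (q : ℝ) = ((p - q : ℕ) : ℝ) := by
    rw [Nat.cast_sub hq]
  rw [hcast]
  generalize (p - q : ℕ) = m
  rcases m with _ | _ | m
  · push_cast
    field_simp
    ring
  · push_cast
    field_simp
    ring
  · push_cast
    field_simp
    ring


theorem bsPowered_solves_pde (σ K r : ℝ) (hσ : 0 < σ) (hK : 0 < K)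
    (p : ℕ) (hp : 1 ≤ p) (τ x : ℝ) (hτ : 0 < τ) (hx : 0 < x) :
    ∃ ux uxx : ℝ,
      HasDerivAt (fun y : ℝ => bsPowered σ K r p τ y) ux x ∧
      HasDerivAt (deriv (fun y : ℝ => bsPowered σ K r p τ y)) uxx x ∧
      HasDerivAt (fun t : ℝ => bsPowered σ K r p t x)
        (1 / 2 * σ ^ 2 * x ^ 2 * uxx + r * x * ux - r * bsPowered σ K r p τ x) τ := by
  have hA : ∀ y ∈ Set.Ioi (0 : ℝ), HasDerivAt (fun y : ℝ => bsPowered σ K r p τ y)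
      (∑ q ∈ Finset.range (p + 1), bsP1 σ K r p q τ y) y := by
    intro y hy
    unfold bsPowered
    exact HasDerivAt.fun_sum fun q _ => hasDerivAt_term_x σ K r p q τ hσ hK hτ hy
  refine ⟨∑ q ∈ Finset.range (p + 1), bsP1 σ K r p q τ x,
      ∑ q ∈ Finset.range (p + 1), bsP2 σ K r p q τ x, hA x hx, ?_, ?_⟩
  · have heq : deriv (fun y : ℝ => bsPowered σ K r p τ y)
        =ᶠ[nhds x] fun y => ∑ q ∈ Finset.range (p + 1), bsP1 σ K r p q τ y :=
      Filter.eventually_of_mem (isOpen_Ioi.mem_nhds hx) fun y hy => (hA y hy).deriv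
    have hB : HasDerivAt (fun y : ℝ => ∑ q ∈ Finset.range (p + 1), bsP1 σ K r p q τ y)
        (∑ q ∈ Finset.range (p + 1), bsP2 σ K r p q τ x) x :=
      HasDerivAt.fun_sum fun q _ => hasDerivAt_bsP1_x σ K r p q τ hσ hK hτ hx
    exact hB.congr_of_eventuallyEq heq
  · have hT : HasDerivAt (fun t : ℝ => bsPowered σ K r p t x)
        (∑ q ∈ Finset.range (p + 1), bsPT σ K r p q τ x) τ := by
      unfold bsPowered
      exact HasDerivAt.fun_sum fun q _ => hasDerivAt_term_t σ K r p q x hσ hK hx hτ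
    have hsum : ∑ q ∈ Finset.range (p + 1), bsPT σ K r p q τ x
        = 1 / 2 * σ ^ 2 * x ^ 2 * (∑ q ∈ Finset.range (p + 1), bsP2 σ K r p q τ x)
          + r * x * (∑ q ∈ Finset.range (p + 1), bsP1 σ K r p q τ x)
          - r * bsPowered σ K r p τ x := by
      rw [Finset.sum_congr rfl fun q hq =>
        key_identity σ K r hσ hK p q (Finset.mem_range_succ_iff.mp hq) τ x hτ hx]
      unfold bsPowered
      rw [Finset.sum_sub_distrib, Finset.sum_add_distrib, ← Finset.mul_sum, ← Finset.mul_sum,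
        ← Finset.mul_sum]
    exact hsum ▸ hT
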